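/- Let q be prime, k ≥ 2, and let i, j : Fin k → ℕ be such that every entry of i and of j is strictly less than √q. Suppose there exists c ∈ ZMod q such that for all m, (i_m : ZMod q) = c · (j_m : ZMod q) (i.e., the reductions mod q of i and j are linearly dependent over ZMod q with i = c·j). Then i_0 · j_1 = i_1 · j_0 as natural numbers. -/
import Mathlib

/-- For `q` prime and `k ≥ 2`, if `i, j : Fin k → ℕ` have all entries `< √q` and their
reductions mod `q` satisfy `i = c • j` for some scalar `c : ZMod q`, then
`i 0 * j 1 = i 1 * j 0` as natural numbers. -/
theorem dependent_small_vectors (q k : ℕ) (hq : Nat.Prime q) (hk : 2 ≤ k)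
    (i j : Fin k → ℕ)
    (hi : ∀ m, (i m : ℝ) < Real.sqrt q) (hj : ∀ m, (j m : ℝ) < Real.sqrt q)
    (hdep : ∃ c : ZMod q, ∀ m, (i m : ZMod q) = c * (j m : ZMod q)) :
    i ⟨0, by omega⟩ * j ⟨1, by omega⟩ = i ⟨1, by omega⟩ * j ⟨0, by omega⟩ := by
  obtain ⟨c, hc⟩ := hdep
  set m0 : Fin k := ⟨0, by omega⟩
  set m1 : Fin k := ⟨1, by omega⟩
  have hbound : ∀ a b : Fin k, i a * j b < q := by
    intro a b
    have h1 : (i a : ℝ) * (j b : ℝ) < Real.sqrt q * Real.sqrt q :=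
      mul_lt_mul'' (hi a) (hj b) (by positivity) (by positivity)
    rw [Real.mul_self_sqrt (by positivity)] at h1
    exact_mod_cast (by push_cast at h1 ⊢; exact h1 : ((i a * j b : ℕ) : ℝ) < (q : ℝ))
  have hmod : ((i m0 * j m1 : ℕ) : ZMod q) = ((i m1 * j m0 : ℕ) : ZMod q) := by
    push_cast
    rw [hc m0, hc m1]
    ring
  have := (ZMod.natCast_eq_natCast_iff' _ _ _).mp hmod
  rwa [Nat.mod_eq_of_lt (hbound m0 m1), Nat.mod_eq_of_lt (hbound m1 m0)] at this
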